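/- Let S(ρ) = ∑_{μ∈F} K_μ ρ K_μ^† be a trace-preserving Kraus-form map on complex matrices indexed by Fin n ⊕ Fin m satisfying: (i) P_A S(ρ) P_A = S(ρ) for all ρ, and (ii) there is an n×n unitary U_A with S(ρ) equal to the block embedding of U_A ρ_A U_A^† whenever P_A ρ P_A = ρ. Write each K_μ in block form as [[A_μ, B_μ],[0,0]] (which hypothesis (i) forces). Then for every matrix ρ with blocks ρ_A (upper-left n×n) and ρ_Ā (lower-right m×m), S(ρ) equals the block embedding of U_A ρ_A U_A^† + ∑_μ B_μ ρ_Ā B_μ^†. In particular S is realized by the one-step measurement-based feedback protocol: project onto the A or Ā block, apply U_A on outcome A, and apply the map with Kraus operators (B_μ) on outcome Ā. -/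

import Mathlib

open Matrix BigOperators

/-- The orthogonal projection onto the first (`A`) block. -/
noncomputable def projA (n m : ℕ) : Matrix (Fin n ⊕ Fin m) (Fin n ⊕ Fin m) ℂ :=
  Matrix.fromBlocks 1 0 0 0

/-- A finite sum of `z * star z` vanishing forces every term to vanish. -/
lemma sum_mul_star_self_eq_zero {ι : Type*} [Fintype ι] (f : ι → ℂ)
    (h : ∑ i, f i * star (f i) = 0) (i : ι) : f i = 0 := by
  have h0 : ∑ i, Complex.normSq (f i) = 0 := by
    have : ((∑ i, Complex.normSq (f i) : ℝ) : ℂ) = 0 := by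
      push_cast
      simpa [Complex.mul_conj] using h
    exact_mod_cast this
  have := (Finset.sum_eq_zero_iff_of_nonneg
    (fun i _ => Complex.normSq_nonneg (f i))).mp h0
  exact Complex.normSq_eq_zero.mp (this i (Finset.mem_univ i))

/-- Pushing a finite sum inside `fromBlocks`. -/
lemma sum_fromBlocks {F : Type*} [Fintype F] {n m : ℕ}
    (f : F → Matrix (Fin n) (Fin n) ℂ) (g : F → Matrix (Fin n) (Fin m) ℂ)
    (h : F → Matrix (Fin m) (Fin n) ℂ) (k : F → Matrix (Fin m) (Fin m) ℂ) :
    ∑ μ, Matrix.fromBlocks (f μ) (g μ) (h μ) (k μ)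
      = Matrix.fromBlocks (∑ μ, f μ) (∑ μ, g μ) (∑ μ, h μ) (∑ μ, k μ) := by
  ext (i | i) (j | j) <;> simp [Matrix.sum_apply]

/-- Kraus operators of the identity channel are scalar multiples of `1`. -/
lemma kraus_id {n : ℕ} {F : Type*} [Fintype F] (M : F → Matrix (Fin n) (Fin n) ℂ)
    (h : ∀ σ, ∑ μ, M μ * σ * (M μ)ᴴ = σ) :
    ∃ c : F → ℂ, ∀ μ, M μ = c μ • (1 : Matrix (Fin n) (Fin n) ℂ) := by
  rcases Nat.eq_zero_or_pos n with hn | hn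
  · exact ⟨0, fun μ => by subst hn; ext i; exact i.elim0⟩
  have key : ∀ i j k l : Fin n, ∑ μ, M μ k i * star (M μ l j)
      = Matrix.single i j (1 : ℂ) k l := by
    intro i j k l
    have := congrFun (congrFun (h (Matrix.single i j 1)) k) l
    rw [← this, Matrix.sum_apply]
    congr 1
    ext μ
    simp [Matrix.mul_apply, Matrix.single, Matrix.conjTranspose_apply,
      Finset.sum_mul, ite_and, mul_comm]
  have offd : ∀ μ (k i : Fin n), k ≠ i → M μ k i = 0 := by
    intro μ k i hki
    refine sum_mul_star_self_eq_zero (fun μ => M μ k i) ?_ μ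
    rw [key i i k k]
    simp [Matrix.single, hki.symm]
  have diag : ∀ μ (i j : Fin n), M μ i i = M μ j j := by
    intro μ i j
    have hz := sum_mul_star_self_eq_zero (fun μ => M μ i i - M μ j j) ?_ μ
    · linear_combination hz
    have e1 : ∑ μ, M μ i i * star (M μ i i) = 1 := by rw [key i i i i]; simp
    have e2 : ∑ μ, M μ j j * star (M μ j j) = 1 := by rw [key j j j j]; simp
    have e3 : ∑ μ, M μ i i * star (M μ j j) = 1 := by rw [key i j i j]; simp
    have e4 : ∑ μ, M μ j j * star (M μ i i) = 1 := by rw [key j i j i]; simp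
    have expand : ∑ μ, (M μ i i - M μ j j) * star (M μ i i - M μ j j)
        = (∑ μ, M μ i i * star (M μ i i)) - (∑ μ, M μ i i * star (M μ j j))
          - (∑ μ, M μ j j * star (M μ i i)) + ∑ μ, M μ j j * star (M μ j j) := by
      rw [← Finset.sum_sub_distrib, ← Finset.sum_sub_distrib, ← Finset.sum_add_distrib]
      congr 1; ext μ; push_cast [star_sub]; ring
    rw [expand, e1, e2, e3, e4]; ring
  refine ⟨fun μ => M μ ⟨0, hn⟩ ⟨0, hn⟩, fun μ => ?_⟩
  ext k i
  by_cases hki : k = i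
  · subst hki
    simpa using diag μ k ⟨0, hn⟩
  · simp [offd μ k i hki, Matrix.one_apply, hki]

/-- the channel acts as the one-step measurement-based feedback
protocol: `S(ρ)` is the block embedding of
`U_A ρ_A U_Aᴴ + ∑_μ B_μ ρ_Ā B_μᴴ` where `B_μ` is the upper-right block of
`K_μ`. -/
theorem dfs_channel_is_measurement_feedback {n m : ℕ} {F : Type*} [Fintype F]
    (K : F → Matrix (Fin n ⊕ Fin m) (Fin n ⊕ Fin m) ℂ)
    (S : Matrix (Fin n ⊕ Fin m) (Fin n ⊕ Fin m) ℂ →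
         Matrix (Fin n ⊕ Fin m) (Fin n ⊕ Fin m) ℂ)
    (hS : ∀ ρ, S ρ = ∑ μ, K μ * ρ * (K μ)ᴴ)
    (htp : ∑ μ, (K μ)ᴴ * K μ = 1)
    (hsupp : ∀ ρ, projA n m * S ρ * projA n m = S ρ)
    (UA : Matrix (Fin n) (Fin n) ℂ)
    (hUA : UA ∈ Matrix.unitaryGroup (Fin n) ℂ)
    (hdfs : ∀ ρ : Matrix (Fin n ⊕ Fin m) (Fin n ⊕ Fin m) ℂ,
      projA n m * ρ * projA n m = ρ →
      S ρ = Matrix.fromBlocks (UA * ρ.toBlocks₁₁ * UAᴴ) 0 0 0) :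
    ∀ ρ : Matrix (Fin n ⊕ Fin m) (Fin n ⊕ Fin m) ℂ,
      S ρ = Matrix.fromBlocks
        (UA * ρ.toBlocks₁₁ * UAᴴ +
          ∑ μ, (K μ).toBlocks₁₂ * ρ.toBlocks₂₂ * ((K μ).toBlocks₁₂)ᴴ)
        0 0 0 := by
  -- unitarity of `UA`
  have hU1 : UAᴴ * UA = 1 := by
    have := hUA.1
    simpa [Matrix.star_eq_conjTranspose] using this
  have hU2 : UA * UAᴴ = 1 := by
    have := hUA.2
    simpa [Matrix.star_eq_conjTranspose] using this
  -- the lower rows of every Kraus operator vanish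
  have h0 : ∀ μ (i : Fin m) j, K μ (Sum.inr i) j = 0 := by
    intro μ i j
    have e := hsupp 1
    rw [hS 1] at e
    have hP : ∀ a, projA n m (Sum.inr i) a = 0 := by
      rintro (a | a) <;> simp [projA]
    rw [Matrix.mul_assoc] at e
    have hXe := congrFun (congrFun e (Sum.inr i)) (Sum.inr i)
    rw [Matrix.mul_apply] at hXe
    rw [Finset.sum_eq_zero (fun a _ => by rw [hP a, zero_mul])] at hXe
    have hc : ∑ μ : F, ∑ j, K μ (Sum.inr i) j * star (K μ (Sum.inr i) j) = 0 := by
      simpa only [mul_one, Matrix.sum_apply, Matrix.mul_apply,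
        Matrix.conjTranspose_apply] using hXe.symm
    have hc' : ∑ p : F × (Fin n ⊕ Fin m),
        K p.1 (Sum.inr i) p.2 * star (K p.1 (Sum.inr i) p.2) = 0 := by
      rw [Fintype.sum_prod_type]; exact hc
    exact sum_mul_star_self_eq_zero _ hc' (μ, j)
  -- block form of the Kraus operators
  have hK : ∀ μ, K μ = Matrix.fromBlocks (K μ).toBlocks₁₁ (K μ).toBlocks₁₂ 0 0 := by
    intro μ
    ext (i | i) (j | j) <;>
      simp [Matrix.toBlocks₁₁, Matrix.toBlocks₁₂, h0]
  -- action on block-supported states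
  have hA : ∀ σ : Matrix (Fin n) (Fin n) ℂ,
      ∑ μ, (K μ).toBlocks₁₁ * σ * ((K μ).toBlocks₁₁)ᴴ = UA * σ * UAᴴ := by
    intro σ
    have hd := hdfs (Matrix.fromBlocks σ 0 0 0)
      (by simp [projA, Matrix.fromBlocks_multiply])
    rw [hS] at hd
    have step : ∀ μ : F, K μ * Matrix.fromBlocks σ 0 0 0 * (K μ)ᴴ
        = Matrix.fromBlocks ((K μ).toBlocks₁₁ * σ * ((K μ).toBlocks₁₁)ᴴ) 0 0 0 := by
      intro μ
      rw [hK μ, Matrix.fromBlocks_conjTranspose, Matrix.fromBlocks_multiply,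
        Matrix.fromBlocks_multiply]
      simp
    have hsum : ∑ μ, K μ * Matrix.fromBlocks σ 0 0 0 * (K μ)ᴴ
        = Matrix.fromBlocks (∑ μ, (K μ).toBlocks₁₁ * σ * ((K μ).toBlocks₁₁)ᴴ) 0 0 0 := by
      rw [Finset.sum_congr rfl (fun μ _ => step μ), sum_fromBlocks]
      simp
    rw [hsum] at hd
    have := congrArg Matrix.toBlocks₁₁ hd
    simpa [Matrix.toBlocks_fromBlocks₁₁] using this
  -- trace preservation on blocks
  have htp' : ∑ μ, ((K μ).toBlocks₁₁)ᴴ * (K μ).toBlocks₁₂ = 0 := by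
    have hsum : ∑ μ, (K μ)ᴴ * K μ
        = Matrix.fromBlocks (∑ μ, ((K μ).toBlocks₁₁)ᴴ * (K μ).toBlocks₁₁)
            (∑ μ, ((K μ).toBlocks₁₁)ᴴ * (K μ).toBlocks₁₂)
            (∑ μ, ((K μ).toBlocks₁₂)ᴴ * (K μ).toBlocks₁₁)
            (∑ μ, ((K μ).toBlocks₁₂)ᴴ * (K μ).toBlocks₁₂) := by
      have step : ∀ μ : F, (K μ)ᴴ * K μ
          = Matrix.fromBlocks (((K μ).toBlocks₁₁)ᴴ * (K μ).toBlocks₁₁)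
              (((K μ).toBlocks₁₁)ᴴ * (K μ).toBlocks₁₂)
              (((K μ).toBlocks₁₂)ᴴ * (K μ).toBlocks₁₁)
              (((K μ).toBlocks₁₂)ᴴ * (K μ).toBlocks₁₂) := by
        intro μ
        rw [hK μ, Matrix.fromBlocks_conjTranspose, Matrix.fromBlocks_multiply]
        simp
      rw [Finset.sum_congr rfl (fun μ _ => step μ), sum_fromBlocks]
    rw [hsum, ← Matrix.fromBlocks_one] at htp
    have := congrArg Matrix.toBlocks₁₂ htp
    simpa [Matrix.toBlocks_fromBlocks₁₂, -Matrix.fromBlocks_one] using this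
  -- Kraus operators of the induced identity channel
  have hM : ∀ σ : Matrix (Fin n) (Fin n) ℂ,
      ∑ μ, (UAᴴ * (K μ).toBlocks₁₁) * σ * (UAᴴ * (K μ).toBlocks₁₁)ᴴ = σ := by
    intro σ
    have step : ∀ μ : F, (UAᴴ * (K μ).toBlocks₁₁) * σ * (UAᴴ * (K μ).toBlocks₁₁)ᴴ
        = UAᴴ * ((K μ).toBlocks₁₁ * σ * ((K μ).toBlocks₁₁)ᴴ) * UA := by
      intro μ
      simp only [Matrix.conjTranspose_mul, Matrix.conjTranspose_conjTranspose,
        Matrix.mul_assoc]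
    rw [Finset.sum_congr rfl (fun μ _ => step μ), ← Finset.sum_mul, ← Finset.mul_sum,
      hA σ]
    calc UAᴴ * (UA * σ * UAᴴ) * UA = (UAᴴ * UA) * σ * (UAᴴ * UA) := by
          simp only [Matrix.mul_assoc]
      _ = σ := by rw [hU1, one_mul, mul_one]
  obtain ⟨c, hc⟩ := kraus_id _ hM
  have hA1 : ∀ μ, (K μ).toBlocks₁₁ = c μ • UA := by
    intro μ
    calc (K μ).toBlocks₁₁ = (UA * UAᴴ) * (K μ).toBlocks₁₁ := by rw [hU2, one_mul]
      _ = UA * (UAᴴ * (K μ).toBlocks₁₁) := by rw [Matrix.mul_assoc]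
      _ = UA * (c μ • 1) := by rw [hc μ]
      _ = c μ • UA := by simp
  -- the weighted sum of the `B` blocks vanishes
  have hB0 : ∑ μ, star (c μ) • (K μ).toBlocks₁₂ = 0 := by
    have h1 : ∑ μ, ((K μ).toBlocks₁₁)ᴴ * (K μ).toBlocks₁₂
        = UAᴴ * ∑ μ, star (c μ) • (K μ).toBlocks₁₂ := by
      rw [Matrix.mul_sum]
      refine Finset.sum_congr rfl fun μ _ => ?_
      rw [hA1 μ]
      simp [Matrix.smul_mul, Matrix.mul_smul]
    have h2 : UAᴴ * ∑ μ, star (c μ) • (K μ).toBlocks₁₂ = 0 := by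
      rw [← h1, htp']
    calc ∑ μ, star (c μ) • (K μ).toBlocks₁₂
        = (UA * UAᴴ) * ∑ μ, star (c μ) • (K μ).toBlocks₁₂ := by
          rw [hU2, Matrix.one_mul]
      _ = UA * (UAᴴ * ∑ μ, star (c μ) • (K μ).toBlocks₁₂) := by rw [Matrix.mul_assoc]
      _ = 0 := by rw [h2, Matrix.mul_zero]
  intro ρ
  -- cross terms vanish
  have hcross1 : ∑ μ, (K μ).toBlocks₁₁ * ρ.toBlocks₁₂ * ((K μ).toBlocks₁₂)ᴴ = 0 := by
    have : ∀ μ : F, (K μ).toBlocks₁₁ * ρ.toBlocks₁₂ * ((K μ).toBlocks₁₂)ᴴ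
        = UA * ρ.toBlocks₁₂ * (star (c μ) • (K μ).toBlocks₁₂)ᴴ := by
      intro μ
      rw [hA1 μ]
      simp [Matrix.smul_mul, Matrix.mul_smul]
    rw [Finset.sum_congr rfl (fun μ _ => this μ), ← Matrix.mul_sum,
      ← Matrix.conjTranspose_sum, hB0]
    simp
  have hcross2 : ∑ μ, (K μ).toBlocks₁₂ * ρ.toBlocks₂₁ * ((K μ).toBlocks₁₁)ᴴ = 0 := by
    have : ∀ μ : F, (K μ).toBlocks₁₂ * ρ.toBlocks₂₁ * ((K μ).toBlocks₁₁)ᴴ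
        = (star (c μ) • (K μ).toBlocks₁₂) * (ρ.toBlocks₂₁ * UAᴴ) := by
      intro μ
      rw [hA1 μ]
      simp [Matrix.smul_mul, Matrix.mul_smul, Matrix.mul_assoc]
    rw [Finset.sum_congr rfl (fun μ _ => this μ), ← Matrix.sum_mul, hB0,
      Matrix.zero_mul]
  -- expand every term in block form
  have expand : ∀ μ : F, K μ * ρ * (K μ)ᴴ
      = Matrix.fromBlocks
          ((K μ).toBlocks₁₁ * ρ.toBlocks₁₁ * ((K μ).toBlocks₁₁)ᴴ
            + (K μ).toBlocks₁₁ * ρ.toBlocks₁₂ * ((K μ).toBlocks₁₂)ᴴ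
            + ((K μ).toBlocks₁₂ * ρ.toBlocks₂₁ * ((K μ).toBlocks₁₁)ᴴ
              + (K μ).toBlocks₁₂ * ρ.toBlocks₂₂ * ((K μ).toBlocks₁₂)ᴴ))
          0 0 0 := by
    intro μ
    conv_lhs => rw [hK μ, ← Matrix.fromBlocks_toBlocks ρ]
    rw [Matrix.fromBlocks_conjTranspose, Matrix.fromBlocks_multiply,
      Matrix.fromBlocks_multiply]
    congr 1 <;> simp [Matrix.add_mul, Matrix.mul_assoc] <;> abel
  rw [hS ρ, Finset.sum_congr rfl (fun μ _ => expand μ), sum_fromBlocks,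
    Finset.sum_add_distrib, Finset.sum_add_distrib, Finset.sum_add_distrib,
    hA ρ.toBlocks₁₁, hcross1, hcross2]
  congr 1 <;> simp
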